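/- General gauge invariance of the partition function: consider a Forney-style graphical model with variables v ∈ X (each taking values in Fin d and adjacent to exactly two factors) and factors {f_α}. For gauges {G_{vα}} satisfying G_{vα}ᵀ G_{vβ} = I whenever N(v) = {α, β}, define f̂_α(x_α) = ∑_{x'_α} f_α(x'_α) ∏_{v∈N(α)} G_{vα}(x_v, x'_v). Then ∑_x ∏_α f̂_α(x_α) = ∑_x ∏_α f_α(x_α). -/

import Mathlib

open Finset Matrix

/-- The "full" gauge associated to variable `v` and factor `α` in a Forney-style
GM where every variable `v` is adjacent to exactly the two factors `a v` and
`b v`: it is the given gauge on adjacent factors and the identity otherwise. -/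
noncomputable def fullGauge {V F : Type*} [DecidableEq F] (d : ℕ)
    (a b : V → F) (G : V → F → Matrix (Fin d) (Fin d) ℝ) (v : V) (α : F) :
    Matrix (Fin d) (Fin d) ℝ :=
  if a v = α ∨ b v = α then G v α else 1

/-- The gauge-transformed factor
`f̂_α(x) = ∑ x', f_α(x') ∏_v G_{vα}(x_v, x'_v)`, where non-adjacent variables
carry the identity gauge. -/
noncomputable def gaugedFactor {V F : Type*} [DecidableEq F] [Fintype V] [DecidableEq V] (d : ℕ)
    (a b : V → F) (G : V → F → Matrix (Fin d) (Fin d) ℝ)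
    (f : F → (V → Fin d) → ℝ) (α : F) (x : V → Fin d) : ℝ :=
  ∑ x' : V → Fin d, f α x' * ∏ v : V, fullGauge d a b G v α (x v) (x' v)

/-- General gauge invariance of the partition function for Forney-style GMs:
each variable `v` is adjacent to exactly the two distinct factors `a v ≠ b v`,
each factor `f_α` depends only on its adjacent variables, and the gauges
satisfy `G_{v,a v}ᵀ * G_{v,b v} = 1`.  Then the partition function of the
gauge-transformed GM equals that of the original GM. -/
theorem gauge_invariance (V F : Type*) [Fintype V] [DecidableEq V] [Fintype F] [DecidableEq F]
    (d : ℕ) [NeZero d]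
    (a b : V → F) (hab : ∀ v, a v ≠ b v)
    (f : F → (V → Fin d) → ℝ)
    (hlocal : ∀ α x x', (∀ v : V, (a v = α ∨ b v = α) → x v = x' v) →
      f α x = f α x')
    (G : V → F → Matrix (Fin d) (Fin d) ℝ)
    (hG : ∀ v, (G v (a v))ᵀ * G v (b v) = 1) :
    ∑ x : V → Fin d, ∏ α : F, gaugedFactor d a b G f α x =
      ∑ x : V → Fin d, ∏ α : F, f α x := by
  classical
  set g : F → (V → Fin d) → ℝ :=
    fun α y => f α (fun v => if a v = α ∨ b v = α then y v else 0) with hgdef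
  have hg : ∀ α y, g α y = f α y := fun α y =>
    hlocal α _ y (fun v hv => by simp only [if_pos hv])
  have hgadj : ∀ α (y y' : V → Fin d), (∀ v, (a v = α ∨ b v = α) → y v = y' v) →
      g α y = g α y' := by
    intro α y y' h
    refine hlocal α _ _ (fun v hv => ?_)
    simp only [if_pos hv]
    exact h v hv
  -- Step 1: expand the product of gauged factors
  have step1 : ∀ x : V → Fin d, ∏ α : F, gaugedFactor d a b G f α x
      = ∑ p : F → V → Fin d, (∏ α, g α (p α)) *
          ∏ α, ∏ v, fullGauge d a b G v α (x v) (p α v) := by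
    intro x
    have h1 : ∀ α : F, gaugedFactor d a b G f α x
        = ∑ y : V → Fin d, g α y * ∏ v, fullGauge d a b G v α (x v) (y v) :=
      fun α => Finset.sum_congr rfl fun y _ => by rw [hg]
    rw [Finset.prod_congr rfl fun α _ => h1 α, Fintype.prod_sum]
    exact Finset.sum_congr rfl fun p _ => by rw [Finset.prod_mul_distrib]
  -- Step 2: involution normalizing nonadjacent coordinates
  have step2 : ∀ x : V → Fin d,
      ∑ p : F → V → Fin d, (∏ α, g α (p α)) *
          ∏ α, ∏ v, fullGauge d a b G v α (x v) (p α v)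
      = ∑ p : F → V → Fin d, (∏ α, g α (p α)) *
          ((∏ v, G v (a v) (x v) (p (a v) v) * G v (b v) (x v) (p (b v) v)) *
           ∏ v, ∏ α ∈ univ \ {a v, b v}, (if p α v = 0 then (1:ℝ) else 0)) := by
    intro x
    set Φ : (F → V → Fin d) → (F → V → Fin d) :=
      fun p α v => if a v = α ∨ b v = α then p α v else Equiv.swap (x v) 0 (p α v) with hΦ
    have hinv : Function.Involutive Φ := by
      intro p; funext α v
      by_cases h : a v = α ∨ b v = α <;> simp [hΦ, h]
    refine (Fintype.sum_bijective Φ hinv.bijective _ _ fun p => ?_).symm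
    congr 1
    · exact Finset.prod_congr rfl fun α _ =>
        hgadj α _ _ (fun v hv => by simp only [hΦ, if_pos hv])
    · rw [Finset.prod_comm, ← Finset.prod_mul_distrib]
      refine Finset.prod_congr rfl fun v _ => ?_
      have hv1 : G v (a v) (x v) (p (a v) v)
          = fullGauge d a b G v (a v) (x v) (Φ p (a v) v) := by
        simp [fullGauge, hΦ]
      have hv2 : G v (b v) (x v) (p (b v) v)
          = fullGauge d a b G v (b v) (x v) (Φ p (b v) v) := by
        simp [fullGauge, hΦ]
      have hv3 : ∀ α ∈ univ \ ({a v, b v} : Finset F),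
          (if p α v = 0 then (1:ℝ) else 0)
          = fullGauge d a b G v α (x v) (Φ p α v) := by
        intro α hα
        rw [Finset.mem_sdiff, Finset.mem_insert, Finset.mem_singleton] at hα
        have hna : ¬ (a v = α ∨ b v = α) := by
          rintro (h | h) <;> exact absurd h.symm (by tauto)
        simp only [fullGauge, hΦ, if_neg hna, Matrix.one_apply]
        congr 1
        rw [eq_iff_iff]
        constructor
        · intro h
          rw [h, Equiv.swap_apply_right]
        · intro h
          have h2 := congrArg (Equiv.swap (x v) 0) h
          rw [Equiv.swap_apply_self, Equiv.swap_apply_left] at h2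
          exact h2.symm
      rw [hv1, hv2, Finset.prod_congr rfl hv3,
        ← Finset.prod_pair (hab v)
          (f := fun α => fullGauge d a b G v α (x v) (Φ p α v)),
        mul_comm, Finset.prod_sdiff (Finset.subset_univ _)]
  -- Step 3: sum over x, the gauges cancel
  have step3 : ∀ p : F → V → Fin d,
      ∑ x : V → Fin d, ∏ v, G v (a v) (x v) (p (a v) v) * G v (b v) (x v) (p (b v) v)
      = ∏ v, (if p (a v) v = p (b v) v then (1:ℝ) else 0) := by
    intro p
    rw [← Fintype.prod_sum (fun v t => G v (a v) t (p (a v) v) * G v (b v) t (p (b v) v))]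
    refine Finset.prod_congr rfl fun v _ => ?_
    have h2 := congrArg (fun M : Matrix (Fin d) (Fin d) ℝ =>
      M (p (a v) v) (p (b v) v)) (hG v)
    simpa [Matrix.mul_apply, Matrix.transpose_apply, Matrix.one_apply] using h2
  -- Step 5: final bijection
  have step5 : ∑ p : F → V → Fin d, (∏ α, g α (p α)) *
          ((∏ v, (if p (a v) v = p (b v) v then (1:ℝ) else 0)) *
           ∏ v, ∏ α ∈ univ \ {a v, b v}, (if p α v = 0 then (1:ℝ) else 0))
      = ∑ x : V → Fin d, ∏ α, g α x := by
    have hsummand : ∀ p : F → V → Fin d,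
        (∏ α, g α (p α)) * ((∏ v, (if p (a v) v = p (b v) v then (1:ℝ) else 0)) *
           ∏ v, ∏ α ∈ univ \ {a v, b v}, (if p α v = 0 then (1:ℝ) else 0))
        = if (∀ v, p (a v) v = p (b v) v) ∧
            (∀ (v : V) (α : F), α ≠ a v → α ≠ b v → p α v = 0)
          then ∏ α, g α (p α) else 0 := by
      intro p
      by_cases h1 : ∀ v, p (a v) v = p (b v) v
      · by_cases h2 : ∀ (v : V) (α : F), α ≠ a v → α ≠ b v → p α v = 0
        · rw [if_pos ⟨h1, h2⟩]
          have e1 : (∏ v, if p (a v) v = p (b v) v then (1:ℝ) else 0) = 1 :=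
            Finset.prod_eq_one fun v _ => if_pos (h1 v)
          have e2 : (∏ v, ∏ α ∈ univ \ ({a v, b v} : Finset F),
              if p α v = 0 then (1:ℝ) else 0) = 1 :=
            Finset.prod_eq_one fun v _ => Finset.prod_eq_one fun α hα => by
              rw [Finset.mem_sdiff, Finset.mem_insert, Finset.mem_singleton] at hα
              exact if_pos (h2 v α (fun h => hα.2 (Or.inl h)) (fun h => hα.2 (Or.inr h)))
          rw [e1, e2]; ring
        · rw [if_neg (fun hc => h2 hc.2)]
          push_neg at h2
          obtain ⟨v, α, hα1, hα2, hα3⟩ := h2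
          have e2 : (∏ v, ∏ α ∈ univ \ ({a v, b v} : Finset F),
              if p α v = 0 then (1:ℝ) else 0) = 0 := by
            refine Finset.prod_eq_zero (Finset.mem_univ v) ?_
            refine Finset.prod_eq_zero ?_ (if_neg hα3)
            rw [Finset.mem_sdiff, Finset.mem_insert, Finset.mem_singleton]
            exact ⟨Finset.mem_univ _,
              fun hc => by rcases hc with hc | hc; exacts [hα1 hc, hα2 hc]⟩
          rw [e2]; ring
      · rw [if_neg (fun hc => h1 hc.1)]
        push_neg at h1
        obtain ⟨v, hv⟩ := h1
        have e1 : (∏ v, if p (a v) v = p (b v) v then (1:ℝ) else 0) = 0 :=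
          Finset.prod_eq_zero (Finset.mem_univ v) (if_neg hv)
        rw [e1]; ring
    rw [Finset.sum_congr rfl fun p _ => hsummand p, ← Finset.sum_filter]
    refine Finset.sum_bij' (fun p _ => fun v => p (a v) v)
      (fun x _ => fun α v => if a v = α ∨ b v = α then x v else 0)
      (fun p _ => Finset.mem_univ _) ?_ ?_ ?_ ?_
    · intro x _
      rw [Finset.mem_filter]
      refine ⟨Finset.mem_univ _, fun v => by simp, fun v α h1 h2 => ?_⟩
      dsimp only
      rw [if_neg]
      rintro (h | h)
      exacts [h1 h.symm, h2 h.symm]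
    · intro p hp
      obtain ⟨-, hP1, hP2⟩ := Finset.mem_filter.mp hp
      funext α v
      dsimp only
      by_cases h : a v = α ∨ b v = α
      · rw [if_pos h]
        rcases h with h | h
        · rw [← h]
        · rw [← h, hP1 v]
      · rw [if_neg h]
        push_neg at h
        exact (hP2 v α (fun hc => h.1 hc.symm) (fun hc => h.2 hc.symm)).symm
    · intro x _
      funext v
      dsimp only
      rw [if_pos (Or.inl rfl)]
    · intro p hp
      obtain ⟨-, hP1, -⟩ := Finset.mem_filter.mp hp
      refine Finset.prod_congr rfl fun α _ => ?_
      refine hgadj α (p α) _ (fun v hv => ?_)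
      rcases hv with h | h
      · rw [← h]
      · rw [← h, hP1 v]
  -- assemble everything
  calc ∑ x : V → Fin d, ∏ α : F, gaugedFactor d a b G f α x
      = ∑ x : V → Fin d, ∑ p : F → V → Fin d, (∏ α, g α (p α)) *
          ((∏ v, G v (a v) (x v) (p (a v) v) * G v (b v) (x v) (p (b v) v)) *
           ∏ v, ∏ α ∈ univ \ {a v, b v}, (if p α v = 0 then (1:ℝ) else 0)) := by
        refine Finset.sum_congr rfl fun x _ => ?_
        rw [step1 x, step2 x]
    _ = ∑ p : F → V → Fin d, (∏ α, g α (p α)) *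
          ((∏ v, (if p (a v) v = p (b v) v then (1:ℝ) else 0)) *
           ∏ v, ∏ α ∈ univ \ {a v, b v}, (if p α v = 0 then (1:ℝ) else 0)) := by
        rw [Finset.sum_comm]
        refine Finset.sum_congr rfl fun p _ => ?_
        rw [← step3 p, Finset.sum_mul, Finset.mul_sum]
    _ = ∑ x : V → Fin d, ∏ α, g α x := step5
    _ = ∑ x : V → Fin d, ∏ α : F, f α x :=
        Finset.sum_congr rfl fun x _ => Finset.prod_congr rfl fun α _ => hg α x
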